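/- Let p and q be prime numbers with q/p > (1+√5)/2, and let S = ℕ₀[q/(p+q), q²/(p²+pq)] be the subsemiring of the nonnegative rationals generated by these two elements. Then the additive atoms of S are exactly the powers (q/(p+q))^n for n ∈ ℕ₀. -/

import Mathlib

open Pointwise


/-- Witness that `S` is a semidomain: an injective semiring hom into an integral domain. -/
structure SemidomainWitness (S : Type*) [CommSemiring S] where
  D : Type
  [commRing : CommRing D]
  [isDomain : IsDomain D]
  emb : S →+* D
  inj : Function.Injective emb

/-- `S` is a semidomain, i.e. (isomorphic to) a subsemiring of an integral domain. -/
def IsSemidomain (S : Type*) [CommSemiring S] : Prop := Nonempty (SemidomainWitness S)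

/-- `S` is additively reduced: `0` is the only additively invertible element. -/
def AddReduced (S : Type*) [AddZeroClass S] : Prop := ∀ a b : S, a + b = 0 → a = 0

/-- `s` is an atom of the additive monoid `(S, +)` (for `S` additively reduced):
it is nonzero and cannot be written as a sum of two nonzero elements. -/
def IsAddAtom {S : Type*} [AddZeroClass S] (s : S) : Prop :=
  s ≠ 0 ∧ ∀ a b : S, s = a + b → a = 0 ∨ b = 0

/-- `S` is additively Furstenberg: every nonzero element is divisible in `(S, +)`
by an additive atom. -/
def AddFurstenberg (S : Type*) [AddZeroClass S] : Prop :=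
  ∀ s : S, s ≠ 0 → ∃ a t : S, IsAddAtom a ∧ s = a + t

lemma val_multiset_sum (Q : ℕ) [Fact Q.Prime] (n : ℤ) :
    ∀ l : Multiset ℚ, l ≠ 0 → (∀ m ∈ l, 0 < m ∧ n ≤ padicValRat Q m) →
      0 < l.sum ∧ n ≤ padicValRat Q l.sum := by
  intro l
  induction l using Multiset.induction_on with
  | empty => intro h; exact absurd rfl h
  | cons m t ih =>
    intro _ h
    obtain ⟨hm, hvm⟩ := h m (Multiset.mem_cons_self m t)
    rcases eq_or_ne t 0 with rfl | ht
    · simpa using ⟨hm, hvm⟩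
    · obtain ⟨hts, hvt⟩ := ih ht (fun x hx => h x (Multiset.mem_cons_of_mem hx))
      rw [Multiset.sum_cons]
      have hsum : 0 < m + t.sum := add_pos hm hts
      refine ⟨hsum, ?_⟩
      calc n ≤ min (padicValRat Q m) (padicValRat Q t.sum) := le_min hvm hvt
        _ ≤ padicValRat Q (m + t.sum) := padicValRat.min_le_padicValRat_add hsum.ne'


set_option maxHeartbeats 1000000 in
/-- For primes `p, q` with `q/p > (1+√5)/2`, the additive atoms of the semidomain
`S = ℕ₀[q/(p+q), q²/(p²+pq)] ⊆ ℚ≥0` are exactly the powers `(q/(p+q))^n`. -/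
theorem addAtoms_of_Spq (p q : ℕ) (hp : p.Prime) (hq : q.Prime)
    (hpq : (1 + Real.sqrt 5) / 2 < (q : ℝ) / (p : ℝ))
    (Spq : Subsemiring ℚ≥0)
    (hSpq : Spq = Subsemiring.closure
      {(q : ℚ≥0) / ((p : ℚ≥0) + (q : ℚ≥0)),
       (q : ℚ≥0) ^ 2 / ((p : ℚ≥0) ^ 2 + (p : ℚ≥0) * (q : ℚ≥0))}) :
    ∀ s : Spq, IsAddAtom s ↔ ∃ n : ℕ, (s : ℚ≥0) = ((q : ℚ≥0) / ((p : ℚ≥0) + (q : ℚ≥0))) ^ n := by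
  subst hSpq
  haveI : Fact q.Prime := ⟨hq⟩
  have hp0 : 0 < p := hp.pos
  have hq0 : 0 < q := hq.pos
  -- q > p
  have hlt : p < q := by
    have h1 : (1:ℝ) < (1 + Real.sqrt 5) / 2 := by
      nlinarith [Real.sq_sqrt (by norm_num : (5:ℝ) ≥ 0), Real.sqrt_nonneg 5,
        Real.sqrt_lt_sqrt (by norm_num : (1:ℝ) ≥ 0).le (by norm_num : (1:ℝ) < 5)]
    have hp0' : (0:ℝ) < p := by exact_mod_cast hp0
    have : (p:ℝ) < q := by
      have := h1.trans hpq
      calc (p:ℝ) = 1 * p := by ring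
        _ < ((q:ℝ)/p) * p := by
            apply mul_lt_mul_of_pos_right this hp0'
        _ = q := by field_simp
    exact_mod_cast this
  have hqp : ¬ q ∣ p := fun h => absurd (Nat.le_of_dvd hp0 h) (not_le.2 hlt)
  have hqpq : ¬ q ∣ (p + q) := fun h => hqp (by simpa using Nat.dvd_sub h (dvd_refl q))
  -- abbreviations in ℚ≥0
  set x : ℚ≥0 := (q : ℚ≥0) / ((p : ℚ≥0) + (q : ℚ≥0)) with hxdef
  set y : ℚ≥0 := (q : ℚ≥0) ^ 2 / ((p : ℚ≥0) ^ 2 + (p : ℚ≥0) * (q : ℚ≥0)) with hydef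
  have hqQ : (q : ℚ≥0) ≠ 0 := by positivity
  have hpqQ : (p : ℚ≥0) + (q : ℚ≥0) ≠ 0 := by positivity
  have hx0 : x ≠ 0 := div_ne_zero hqQ hpqQ
  have hy0 : y ≠ 0 := div_ne_zero (pow_ne_zero 2 hqQ) (by positivity)
  -- x ≤ 1
  have hx1 : x ≤ 1 := by
    rw [hxdef, div_le_one (by positivity)]
    exact le_add_self
  -- x^2 ≤ y
  have hx2y : x ^ 2 ≤ y := by
    rw [hxdef, hydef, ← NNRat.coe_le_coe]
    push_cast
    rw [div_pow, div_le_div_iff₀ (by positivity) (by positivity)]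
    have hp0' : (0:ℚ) < p := by exact_mod_cast hp0
    have hq0' : (0:ℚ) < q := by exact_mod_cast hq0
    nlinarith [mul_pos (mul_pos hq0' hq0') (mul_pos hp0' hq0'), mul_pos (mul_pos hq0' hq0') (mul_pos hq0' hq0')]
  -- the identity y = x*y + x^2
  have hxy : y = x * y + x ^ 2 := by
    rw [hxdef, hydef, ← NNRat.coe_inj]
    push_cast
    have h1 : (p:ℚ) + q ≠ 0 := by positivity
    have h2 : (p:ℚ)^2 + p*q ≠ 0 := by positivity
    field_simp
    ring
  -- the set of monomials
  set M : Set ℚ≥0 := {m | ∃ a b : ℕ, m = x ^ a * y ^ b} with hMdef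
  have hmono0 : ∀ a b : ℕ, x ^ a * y ^ b ≠ 0 :=
    fun a b => mul_ne_zero (pow_ne_zero a hx0) (pow_ne_zero b hy0)
  -- M is multiplicatively closed
  have hMM : M * M ⊆ M := by
    rintro z hz
    rw [Set.mem_mul] at hz
    obtain ⟨m1, hm1, m2, hm2, rfl⟩ := hz
    obtain ⟨a, b, rfl⟩ := hm1
    obtain ⟨c, d, rfl⟩ := hm2
    exact ⟨a + c, b + d, by rw [pow_add, pow_add]; ring⟩
  -- closure {x,y} is contained in the additive closure of M
  have hsub : ∀ s : ℚ≥0, s ∈ Subsemiring.closure {x, y} → s ∈ AddSubmonoid.closure M := by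
    intro s hs
    induction hs using Subsemiring.closure_induction with
    | mem z hz =>
      rcases hz with rfl | rfl
      · exact AddSubmonoid.subset_closure ⟨1, 0, by ring⟩
      · exact AddSubmonoid.subset_closure ⟨0, 1, by ring⟩
    | zero => exact zero_mem _
    | one => exact AddSubmonoid.subset_closure ⟨0, 0, by ring⟩
    | add u v hu hv ihu ihv => exact add_mem ihu ihv
    | mul u v hu hv ihu ihv =>
      have h : u * v ∈ AddSubmonoid.closure M * AddSubmonoid.closure M :=
        AddSubmonoid.mul_mem_mul ihu ihv
      rw [AddSubmonoid.closure_mul_closure] at h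
      exact AddSubmonoid.closure_mono hMM h
  -- M is contained in the subsemiring
  have hMS : ∀ m ∈ M, m ∈ Subsemiring.closure {x, y} := by
    rintro m ⟨a, b, rfl⟩
    have hxm : x ∈ Subsemiring.closure {x, y} := Subsemiring.subset_closure (by simp)
    have hym : y ∈ Subsemiring.closure {x, y} := Subsemiring.subset_closure (by simp)
    exact mul_mem (pow_mem hxm a) (pow_mem hym b)
  -- valuation facts in ℚ
  have hQ0 : (q:ℚ) ≠ 0 := by positivity
  have hPQ0 : (p:ℚ) + q ≠ 0 := by positivity
  have vq : padicValRat q (q:ℚ) = 1 := by simp [padicValRat.self hq.one_lt]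
  have vpq : padicValRat q ((p:ℚ) + q) = 0 := by
    have h : ((p:ℚ) + q) = ((p + q : ℕ) : ℚ) := by push_cast; ring
    rw [h, padicValRat.of_nat, padicValNat.eq_zero_of_not_dvd hqpq]; simp
  have vX : padicValRat q ((x : ℚ)) = 1 := by
    rw [hxdef]
    push_cast
    rw [padicValRat.div hQ0 hPQ0, vq, vpq]; ring
  have vY : padicValRat q ((y : ℚ)) = 2 := by
    rw [hydef]
    push_cast
    have h : ((p:ℚ)^2 + p*q) = ((p * (p + q) : ℕ) : ℚ) := by push_cast; ring
    rw [padicValRat.div (by positivity) (by positivity), padicValRat.pow, vq, h,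
      padicValRat.of_nat, padicValNat.eq_zero_of_not_dvd]
    · simp
    · intro hdvd
      rcases (Nat.Prime.dvd_mul hq).1 hdvd with h' | h'
      · exact hqp h'
      · exact hqpq h'
  have hxQ0 : (x : ℚ) ≠ 0 := by
    simpa using hx0
  have hyQ0 : (y : ℚ) ≠ 0 := by
    simpa using hy0
  have vmono : ∀ a b : ℕ, padicValRat q ((x:ℚ) ^ a * (y:ℚ) ^ b) = a + 2 * b := by
    intro a b
    rw [padicValRat.mul (pow_ne_zero a hxQ0) (pow_ne_zero b hyQ0),
      padicValRat.pow, padicValRat.pow, vX, vY]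
    ring
  -- x^n is an atom
  intro s
  constructor
  · -- atom → power
    rintro ⟨hne, hdec⟩
    have hsmem : (s : ℚ≥0) ∈ AddSubmonoid.closure M := hsub _ s.2
    obtain ⟨l, hlM, hlsum⟩ := AddSubmonoid.exists_multiset_of_mem_closure hsmem
    have hl0 : l ≠ 0 := by
      rintro rfl
      exact hne (Subtype.ext (by simp [← hlsum]))
    obtain ⟨m, hm⟩ := Multiset.exists_mem_of_ne_zero hl0
    have hl : l = m ::ₘ l.erase m := (Multiset.cons_erase hm).symm
    obtain ⟨a, b, hab⟩ := hlM m hm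
    rcases eq_or_ne (l.erase m) 0 with h0 | h0
    · -- single monomial
      have hsm : (s : ℚ≥0) = x ^ a * y ^ b := by
        rw [← hlsum, hl, h0, Multiset.sum_cons, Multiset.sum_zero, add_zero, hab]
      rcases Nat.eq_zero_or_pos b with rfl | hb
      · exact ⟨a, by simpa using hsm⟩
      · -- decompose using y = x*y + x^2
        obtain ⟨b', rfl⟩ : ∃ b', b = b' + 1 := ⟨b - 1, by omega⟩
        exfalso
        have hdecomp : (s : ℚ≥0) = x ^ (a+1) * y ^ (b'+1) + x ^ (a+2) * y ^ b' := by
          rw [hsm]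
          calc x ^ a * y ^ (b'+1) = (x ^ a * y ^ b') * y := by ring
            _ = (x ^ a * y ^ b') * (x * y + x ^ 2) := by rw [← hxy]
            _ = x ^ (a+1) * y ^ (b'+1) + x ^ (a+2) * y ^ b' := by ring
        have h1 : x ^ (a+1) * y ^ (b'+1) ∈ Subsemiring.closure {x, y} := hMS _ ⟨_, _, rfl⟩
        have h2 : x ^ (a+2) * y ^ b' ∈ Subsemiring.closure {x, y} := hMS _ ⟨_, _, rfl⟩
        rcases hdec ⟨_, h1⟩ ⟨_, h2⟩ (Subtype.ext hdecomp) with h | h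
        · have h' := Subtype.ext_iff.1 h
          simp only [ZeroMemClass.coe_zero] at h'
          exact hmono0 (a+1) (b'+1) h'
        · have h' := Subtype.ext_iff.1 h
          simp only [ZeroMemClass.coe_zero] at h'
          exact hmono0 (a+2) b' h' 
    · -- at least two monomials
      exfalso
      have hsplit : (s : ℚ≥0) = m + (l.erase m).sum := by
        rw [← hlsum]
        conv_lhs => rw [hl]
        rw [Multiset.sum_cons]
      have hmS : m ∈ Subsemiring.closure {x, y} := hMS m (hlM m hm)
      have htS : (l.erase m).sum ∈ Subsemiring.closure {x, y} :=
        multiset_sum_mem _ (fun z hz => hMS z (hlM z (Multiset.mem_of_mem_erase hz)))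
      rcases hdec ⟨m, hmS⟩ ⟨_, htS⟩ (Subtype.ext hsplit) with h | h
      · have : m = 0 := by simpa using congrArg Subtype.val h
        rw [hab] at this
        exact hmono0 _ _ this
      · have hz : (l.erase m).sum = 0 := by simpa using congrArg Subtype.val h
        rw [Multiset.sum_eq_zero_iff] at hz
        obtain ⟨z, hzmem⟩ := Multiset.exists_mem_of_ne_zero h0
        obtain ⟨c, d, hcd⟩ := hlM z (Multiset.mem_of_mem_erase hzmem)
        exact hmono0 c d (hcd ▸ hz z hzmem)
  · -- power → atom
    rintro ⟨n, hsn⟩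
    constructor
    · intro h
      rw [h] at hsn
      exact pow_ne_zero n hx0 (by simpa using hsn.symm)
    · intro u v huv
      by_contra hc
      push_neg at hc
      obtain ⟨hu0, hv0⟩ := hc
      have hu0' : (u : ℚ≥0) ≠ 0 := fun h => hu0 (Subtype.ext h)
      have hv0' : (v : ℚ≥0) ≠ 0 := fun h => hv0 (Subtype.ext h)
      obtain ⟨lu, hluM, hlusum⟩ := AddSubmonoid.exists_multiset_of_mem_closure (hsub _ u.2)
      obtain ⟨lv, hlvM, hlvsum⟩ := AddSubmonoid.exists_multiset_of_mem_closure (hsub _ v.2)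
      have hxn : x ^ n = (u : ℚ≥0) + (v : ℚ≥0) := by
        rw [← hsn]; exact_mod_cast congrArg Subtype.val huv
      -- every monomial appearing is < x^n
      have hkey : ∀ m : ℚ≥0, m ∈ lu + lv → 0 < (m:ℚ) ∧ (n:ℤ) + 1 ≤ padicValRat q (m:ℚ) := by
        intro m hmem
        have hmM : m ∈ M := by
          rcases Multiset.mem_add.1 hmem with h | h
          exacts [hluM m h, hlvM m h]
        obtain ⟨a, b, rfl⟩ := hmM
        have hmlt : x ^ a * y ^ b < x ^ n := by
          rcases Multiset.mem_add.1 hmem with h | h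
          · have h1 : x ^ a * y ^ b ≤ (u : ℚ≥0) := by
              rw [← hlusum]
              exact Multiset.single_le_sum (fun z _ => zero_le) _ h
            have h2 : (u : ℚ≥0) < x ^ n := by
              rw [hxn]
              exact lt_add_of_pos_right _ (pos_iff_ne_zero.mpr hv0')
            exact h1.trans_lt h2
          · have h1 : x ^ a * y ^ b ≤ (v : ℚ≥0) := by
              rw [← hlvsum]
              exact Multiset.single_le_sum (fun z _ => zero_le) _ h
            have h2 : (v : ℚ≥0) < x ^ n := by
              rw [hxn, add_comm]
              exact lt_add_of_pos_right _ (pos_iff_ne_zero.mpr hu0')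
            exact h1.trans_lt h2
        have hexp : n + 1 ≤ a + 2 * b := by
          by_contra hcon
          push_neg at hcon
          have h1 : x ^ n ≤ x ^ (a + 2 * b) :=
            pow_le_pow_of_le_one zero_le hx1 (by omega)
          have h2 : x ^ (a + 2 * b) ≤ x ^ a * y ^ b := by
            rw [pow_add, pow_mul]
            exact mul_le_mul_right (pow_le_pow_left₀ zero_le hx2y b) _
          exact absurd (h1.trans h2) (not_le.2 hmlt)
        constructor
        · have : x ^ a * y ^ b ≠ 0 := hmono0 a b
          positivity
        · have hcast : ((x ^ a * y ^ b : ℚ≥0) : ℚ) = (x:ℚ) ^ a * (y:ℚ) ^ b := by push_cast; ring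
          rw [hcast, vmono a b]
          exact_mod_cast hexp
      -- apply the valuation lemma
      have hlu0 : lu ≠ 0 := by
        rintro rfl
        exact hu0' (by simpa using hlusum.symm)
      have hL : (lu + lv).map (fun m : ℚ≥0 => (m : ℚ)) ≠ 0 := by
        rw [ne_eq, Multiset.map_eq_zero]
        intro h
        exact hlu0 (Multiset.le_zero.1 (h ▸ Multiset.le_add_right lu lv))
      have hval := val_multiset_sum q ((n:ℤ)+1) ((lu + lv).map (fun m : ℚ≥0 => (m : ℚ))) hL
        (by
          intro m hm
          obtain ⟨m', hm', rfl⟩ := Multiset.mem_map.1 hm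
          exact hkey m' hm')
      obtain ⟨-, hge⟩ := hval
      have hsumcast : ((lu + lv).map (fun m : ℚ≥0 => (m : ℚ))).sum = ((x ^ n : ℚ≥0) : ℚ) := by
        have h1 : (lu + lv).sum = x ^ n := by
          rw [Multiset.sum_add, hlusum, hlvsum, hxn]
        rw [← h1]
        exact (map_multiset_sum (NNRat.coeHom) (lu + lv)).symm
      rw [hsumcast] at hge
      have hvxn : padicValRat q ((x ^ n : ℚ≥0) : ℚ) = n := by
        have hc : ((x ^ n : ℚ≥0) : ℚ) = (x:ℚ) ^ n := by push_cast; ring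
        rw [hc, padicValRat.pow, vX]; ring
      rw [hvxn] at hge
      omega
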